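/- Let g, g' be independent standard Gaussian vectors in a finite-dimensional real Hilbert space H, and let u be a linear operator on H. Then the random variable ⟨u g, u g⟩ − ⟨u g', u g'⟩ has the same distribution as 2⟨u g, u g'⟩. -/

import Mathlib

open MeasureTheory ProbabilityTheory RealInnerProductSpace

/-- The standard Gaussian measure on the Euclidean space `ℝ^d`. -/
noncomputable def stdGaussian (d : ℕ) : Measure (EuclideanSpace ℝ (Fin d)) :=
  (Measure.pi fun _ : Fin d => gaussianReal 0 1).map
    (MeasurableEquiv.toLp 2 (Fin d → ℝ))

namespace StdGaussianRotAux

/-- The rotation `(x, y) ↦ ((x+y)/√2, (x−y)/√2)` of the plane, as a measurable equivalence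
(it is an involution). -/
noncomputable def rot : (ℝ × ℝ) ≃ᵐ (ℝ × ℝ) where
  toFun p := ((Real.sqrt 2)⁻¹ * (p.1 + p.2), (Real.sqrt 2)⁻¹ * (p.1 - p.2))
  invFun p := ((Real.sqrt 2)⁻¹ * (p.1 + p.2), (Real.sqrt 2)⁻¹ * (p.1 - p.2))
  left_inv p := by
    have h2 : Real.sqrt 2 * Real.sqrt 2 = 2 := Real.mul_self_sqrt (by norm_num)
    have h0 : Real.sqrt 2 ≠ 0 := by positivity
    ext <;> field_simp <;> rw [Real.sq_sqrt (by norm_num)] <;> ring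
  right_inv p := by
    have h2 : Real.sqrt 2 * Real.sqrt 2 = 2 := Real.mul_self_sqrt (by norm_num)
    have h0 : Real.sqrt 2 ≠ 0 := by positivity
    ext <;> field_simp <;> rw [Real.sq_sqrt (by norm_num)] <;> ring
  measurable_toFun := by
    show Measurable fun p : ℝ × ℝ => ((Real.sqrt 2)⁻¹ * (p.1 + p.2), (Real.sqrt 2)⁻¹ * (p.1 - p.2))
    fun_prop
  measurable_invFun := by
    show Measurable fun p : ℝ × ℝ => ((Real.sqrt 2)⁻¹ * (p.1 + p.2), (Real.sqrt 2)⁻¹ * (p.1 - p.2))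
    fun_prop

lemma rot_apply (p : ℝ × ℝ) :
    rot p = ((Real.sqrt 2)⁻¹ * (p.1 + p.2), (Real.sqrt 2)⁻¹ * (p.1 - p.2)) := rfl

/-- The rotation as a linear map. -/
noncomputable def rotL : (ℝ × ℝ) →ₗ[ℝ] (ℝ × ℝ) where
  toFun p := ((Real.sqrt 2)⁻¹ * (p.1 + p.2), (Real.sqrt 2)⁻¹ * (p.1 - p.2))
  map_add' p q := by ext <;> dsimp <;> ring
  map_smul' c p := by ext <;> dsimp <;> ring

lemma rotL_coe : ⇑rotL = ⇑rot := rfl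

lemma rotL_det : LinearMap.det rotL = -1 := by
  have h2 : Real.sqrt 2 * Real.sqrt 2 = 2 := Real.mul_self_sqrt (by norm_num)
  have h0 : Real.sqrt 2 ≠ 0 := by positivity
  rw [← LinearMap.det_toMatrix (Module.Basis.finTwoProd ℝ), Matrix.det_fin_two]
  simp [LinearMap.toMatrix_apply, rotL, Module.Basis.finTwoProd_zero, Module.Basis.finTwoProd_one,
    Module.Basis.coe_finTwoProd_repr]
  field_simp
  nlinarith [h2]

lemma map_rot_volume : Measure.map (⇑rot) (volume : Measure (ℝ × ℝ)) = volume := by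
  rw [← rotL_coe, Measure.map_linearMap_addHaar_eq_smul_addHaar volume (by rw [rotL_det]; norm_num),
    rotL_det]
  norm_num

lemma map_equiv_withDensity {α β : Type*} [MeasurableSpace α] [MeasurableSpace β]
    (e : α ≃ᵐ β) (μ : Measure α) {f : β → ENNReal} (hf : Measurable f) :
    Measure.map e (μ.withDensity (f ∘ e)) = (Measure.map e μ).withDensity f := by
  ext s hs
  rw [Measure.map_apply e.measurable hs, withDensity_apply _ hs,
    withDensity_apply _ (e.measurable hs), setLIntegral_map hs hf e.measurable]
  rfl

/-- Density of the two-dimensional standard Gaussian. -/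
noncomputable def gpdf2 : ℝ × ℝ → ENNReal := fun p => gaussianPDF 0 1 p.1 * gaussianPDF 0 1 p.2

lemma gpdf2_meas : Measurable gpdf2 :=
  ((measurable_gaussianPDF 0 1).comp measurable_fst).mul
    ((measurable_gaussianPDF 0 1).comp measurable_snd)

lemma prod_gauss :
    (gaussianReal 0 1).prod (gaussianReal 0 1) = (volume : Measure (ℝ × ℝ)).withDensity gpdf2 := by
  have hν : gaussianReal 0 1 = volume.withDensity (gaussianPDF 0 1) :=
    gaussianReal_of_var_ne_zero 0 one_ne_zero
  rw [Measure.volume_eq_prod]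
  refine Measure.prod_eq fun s t hs ht => ?_
  rw [withDensity_apply _ (hs.prod ht), ← Measure.prod_restrict]
  simp only [gpdf2]
  rw [lintegral_prod_mul (measurable_gaussianPDF 0 1).aemeasurable
      (measurable_gaussianPDF 0 1).aemeasurable,
    hν, withDensity_apply _ hs, withDensity_apply _ ht]

lemma gpdf2_rot : gpdf2 ∘ ⇑rot = gpdf2 := by
  funext p
  obtain ⟨x, y⟩ := p
  have h2 : Real.sqrt 2 * Real.sqrt 2 = 2 := Real.mul_self_sqrt (by norm_num)
  have h0 : Real.sqrt 2 ≠ 0 := by positivity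
  simp only [Function.comp_apply, rot_apply, gpdf2, gaussianPDF]
  rw [← ENNReal.ofReal_mul (gaussianPDFReal_nonneg _ _ _),
    ← ENNReal.ofReal_mul (gaussianPDFReal_nonneg _ _ _)]
  congr 1
  simp only [gaussianPDFReal]
  rw [mul_mul_mul_comm, mul_mul_mul_comm _ (Real.exp _), ← Real.exp_add, ← Real.exp_add]
  congr 1
  field_simp
  rw [Real.sq_sqrt (by norm_num)]
  ring

/-- Rotation invariance of the two-dimensional standard Gaussian. -/
lemma rot_prod_gauss :
    Measure.map (⇑rot) ((gaussianReal 0 1).prod (gaussianReal 0 1)) =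
      (gaussianReal 0 1).prod (gaussianReal 0 1) := by
  rw [prod_gauss]
  conv_lhs => rw [← gpdf2_rot]
  rw [map_equiv_withDensity rot volume gpdf2_meas, map_rot_volume]

lemma stdGaussian_eq_pi (d : ℕ) :
    stdGaussian d = (Measure.pi fun _ : Fin d => gaussianReal 0 1).map
      (MeasurableEquiv.toLp 2 (Fin d → ℝ)) := by
  rfl

/-- The rotation `(x, y) ↦ ((x+y)/√2, (x−y)/√2)` on pairs of Euclidean vectors. -/
noncomputable def rotE (d : ℕ) :
    EuclideanSpace ℝ (Fin d) × EuclideanSpace ℝ (Fin d) →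
      EuclideanSpace ℝ (Fin d) × EuclideanSpace ℝ (Fin d) :=
  fun p => ((Real.sqrt 2)⁻¹ • (p.1 + p.2), (Real.sqrt 2)⁻¹ • (p.1 - p.2))

lemma rotE_measurePreserving (d : ℕ) :
    MeasurePreserving (rotE d) ((stdGaussian d).prod (stdGaussian d))
      ((stdGaussian d).prod (stdGaussian d)) := by
  set e := MeasurableEquiv.toLp 2 (Fin d → ℝ)
  have he : MeasurePreserving (e.prodCongr e)
      ((Measure.pi fun _ : Fin d => gaussianReal 0 1).prod (Measure.pi fun _ : Fin d => gaussianReal 0 1))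
      ((stdGaussian d).prod (stdGaussian d)) :=
    MeasurePreserving.prod ⟨e.measurable, (stdGaussian_eq_pi d).symm⟩ ⟨e.measurable, (stdGaussian_eq_pi d).symm⟩
  have A := MeasureTheory.measurePreserving_arrowProdEquivProdArrow ℝ ℝ (Fin d)
    (fun _ => gaussianReal 0 1) (fun _ => gaussianReal 0 1)
  have Api := measurePreserving_pi (fun _ : Fin d => (gaussianReal 0 1).prod (gaussianReal 0 1))
    (fun _ : Fin d => (gaussianReal 0 1).prod (gaussianReal 0 1))
    (f := fun _ p => rot p) (fun _ => ⟨rot.measurable, rot_prod_gauss⟩)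
  have total := A.comp (Api.comp (A.symm (MeasurableEquiv.arrowProdEquivProdArrow ℝ ℝ (Fin d))))
  have hfun : (⇑(MeasurableEquiv.arrowProdEquivProdArrow ℝ ℝ (Fin d)) ∘
      (fun a i => rot (a i)) ∘
      ⇑(MeasurableEquiv.arrowProdEquivProdArrow ℝ ℝ (Fin d)).symm) =
        ⇑(e.prodCongr e).symm ∘ rotE d ∘ ⇑(e.prodCongr e) := by
    funext p
    simp only [Function.comp_apply, MeasurableEquiv.arrowProdEquivProdArrow,
      Equiv.arrowProdEquivProdArrow, MeasurableEquiv.coe_mk, Equiv.coe_fn_mk,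
      MeasurableEquiv.symm_mk, Equiv.coe_fn_symm_mk, rotE, rot_apply]
    rfl
  rw [hfun] at total
  have total2 := he.comp (total.comp (MeasurePreserving.symm _ he))
  convert total2 using 1
  funext p
  simp [Function.comp_apply]

end StdGaussianRotAux

open StdGaussianRotAux in
/-- If `g, g'` are independent standard Gaussian vectors in a finite-dimensional real
Hilbert space and `u` is a linear operator, then `⟨u g, u g⟩ − ⟨u g', u g'⟩` has the
same distribution as `2⟨u g, u g'⟩`. -/
theorem stmt1 {d : ℕ} {Ω : Type*} [MeasurableSpace Ω] (P : Measure Ω)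
    [IsProbabilityMeasure P] (g g' : Ω → EuclideanSpace ℝ (Fin d))
    (hgm : Measurable g) (hg'm : Measurable g')
    (hg : Measure.map g P = stdGaussian d) (hg' : Measure.map g' P = stdGaussian d)
    (hindep : IndepFun g g' P)
    (u : EuclideanSpace ℝ (Fin d) →ₗ[ℝ] EuclideanSpace ℝ (Fin d)) :
    Measure.map (fun ω => ⟪u (g ω), u (g ω)⟫ - ⟪u (g' ω), u (g' ω)⟫) P =
      Measure.map (fun ω => 2 * ⟪u (g ω), u (g' ω)⟫) P := by
  have hpair : Measurable fun ω => (g ω, g' ω) := hgm.prodMk hg'm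
  have hjoint : Measure.map (fun ω => (g ω, g' ω)) P = (stdGaussian d).prod (stdGaussian d) := by
    have h := (indepFun_iff_map_prod_eq_prod_map_map hgm.aemeasurable hg'm.aemeasurable).mp hindep
    rwa [hg, hg'] at h
  have hu : Continuous u := u.continuous_of_finiteDimensional
  set Q : EuclideanSpace ℝ (Fin d) × EuclideanSpace ℝ (Fin d) → ℝ := fun p => ⟪u p.1, u p.1⟫ - ⟪u p.2, u p.2⟫ with hQdef
  have hQ : Measurable Q := by
    apply Continuous.measurable
    exact (continuous_inner.comp ((hu.comp continuous_fst).prodMk (hu.comp continuous_fst))).sub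
      (continuous_inner.comp ((hu.comp continuous_snd).prodMk (hu.comp continuous_snd)))
  have key : ∀ x y : EuclideanSpace ℝ (Fin d), Q (rotE d (x, y)) = 2 * ⟪u x, u y⟫ := by
    intro x y
    have h2 : Real.sqrt 2 * Real.sqrt 2 = 2 := Real.mul_self_sqrt (by norm_num)
    have h0 : Real.sqrt 2 ≠ 0 := by positivity
    have hinv : (Real.sqrt 2)⁻¹ * (Real.sqrt 2)⁻¹ = 1 / 2 := by
      rw [← mul_inv, h2]; norm_num
    have hcomm : ⟪u y, u x⟫ = ⟪u x, u y⟫ := real_inner_comm _ _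
    simp only [hQdef, rotE, _root_.map_smul, map_add, map_sub, real_inner_smul_left,
      real_inner_smul_right, inner_add_left, inner_add_right, inner_sub_left, inner_sub_right]
    linear_combination (2 * (⟪u x, u y⟫ + ⟪u y, u x⟫)) * hinv + hcomm
  calc Measure.map (fun ω => ⟪u (g ω), u (g ω)⟫ - ⟪u (g' ω), u (g' ω)⟫) P
      = Measure.map (Q ∘ fun ω => (g ω, g' ω)) P := rfl
    _ = Measure.map Q (Measure.map (fun ω => (g ω, g' ω)) P) := (Measure.map_map hQ hpair).symm
    _ = Measure.map Q ((stdGaussian d).prod (stdGaussian d)) := by rw [hjoint]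
    _ = Measure.map Q (Measure.map (rotE d) ((stdGaussian d).prod (stdGaussian d))) := by
        rw [(rotE_measurePreserving d).map_eq]
    _ = Measure.map (Q ∘ rotE d) ((stdGaussian d).prod (stdGaussian d)) :=
        Measure.map_map hQ (rotE_measurePreserving d).measurable
    _ = Measure.map (Q ∘ rotE d) (Measure.map (fun ω => (g ω, g' ω)) P) := by rw [hjoint]
    _ = Measure.map ((Q ∘ rotE d) ∘ fun ω => (g ω, g' ω)) P :=
        Measure.map_map (hQ.comp (rotE_measurePreserving d).measurable) hpair
    _ = Measure.map (fun ω => 2 * ⟪u (g ω), u (g' ω)⟫) P := by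
        congr 1
        funext ω
        exact key (g ω) (g' ω)
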